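/- Suppose m_μ = m_ν = m > 0 and that D_n/n → m almost surely, where D_n is the urn size with D_{n+1} = D_n + R_{n+1}, 0 ≤ R_{n+1} ≤ β. If additionally the i.i.d. reinforcements satisfy a large-deviation bound P(∑_{i=1}^n R_i ≤ nm − σ n^{5/8}) ≤ exp(−n^{1/4}/2)/n^{1/8} eventually for some σ > 0, then for any c, α ≥ 0, E[(c+D_n)^{−α}] · (c+D_0+mn)^α → 1 as n → ∞. -/

import Mathlib

open MeasureTheory ProbabilityTheory

lemma convexOn_rpow_neg {α d : ℝ} (hα : 0 ≤ α) (hd : 0 < d) :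
    ConvexOn ℝ (Set.Ici d) (fun x : ℝ => x ^ (-α)) := by
  have hpos : ∀ x ∈ interior (Set.Ici d), (0:ℝ) < x := by
    rw [interior_Ici]; exact fun x hx => hd.trans hx
  have hderiv : ∀ x : ℝ, 0 < x →
      deriv (fun y : ℝ => y ^ (-α)) x = -α * x ^ (-α - 1) :=
    fun x hx => (Real.hasDerivAt_rpow_const (Or.inl hx.ne')).deriv
  apply convexOn_of_deriv2_nonneg (convex_Ici d)
  · intro x hx
    exact (Real.continuousAt_rpow_const x _ (Or.inl (hd.trans_le hx).ne')).continuousWithinAt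
  · intro x hx
    exact (Real.hasDerivAt_rpow_const (p := -α)
      (Or.inl (hpos x hx).ne')).differentiableAt.differentiableWithinAt
  · intro x hx
    have hx0 := hpos x hx
    have hev : deriv (fun y : ℝ => y ^ (-α)) =ᶠ[nhds x] fun y => -α * y ^ (-α - 1) := by
      filter_upwards [IsOpen.mem_nhds isOpen_Ioi hx0] with y hy
      exact hderiv y hy
    have hg : DifferentiableAt ℝ (fun y : ℝ => -α * y ^ (-α - 1)) x :=
      ((Real.hasDerivAt_rpow_const (p := -α - 1) (Or.inl hx0.ne')).const_mul (-α)).differentiableAt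
    exact (hg.congr_of_eventuallyEq hev).differentiableWithinAt
  · intro x hx
    have hx0 := hpos x hx
    have hev : deriv (fun y : ℝ => y ^ (-α)) =ᶠ[nhds x] fun y => -α * y ^ (-α - 1) := by
      filter_upwards [IsOpen.mem_nhds isOpen_Ioi hx0] with y hy
      exact hderiv y hy
    have h2 : deriv^[2] (fun y : ℝ => y ^ (-α)) x
        = deriv (fun y => -α * y ^ (-α - 1)) x := by
      simp only [Function.iterate_succ, Function.iterate_zero, Function.comp_apply, Function.id_def]
      exact hev.deriv_eq
    rw [h2,
      (((Real.hasDerivAt_rpow_const (p := -α - 1) (Or.inl hx0.ne')).const_mul (-α))).deriv]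
    have : -α * ((-α - 1) * x ^ (-α - 1 - 1)) = α * (α + 1) * x ^ (-α - 1 - 1) := by ring
    rw [this]
    positivity

/-- Lemma 4.3 upper asymptotics: if `D_{n+1} = D_n + R_{n+1}` with i.i.d. reinforcements
in `[0,β]` of mean `m > 0`, `D_n/n → m` a.s., and the large-deviation bound
`P(∑_{i=1}^n R_i ≤ nm − σ n^{5/8}) ≤ exp(−n^{1/4}/2)/n^{1/8}` holds eventually, then for
any `c, α ≥ 0`, `E[(c+D_n)^{−α}] (c+D₀+mn)^α → 1`. -/
theorem urn_size_moment_asymptotics {Ω : Type*} {mΩ : MeasurableSpace Ω}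
    {P : Measure Ω} [IsProbabilityMeasure P] (β m D₀ σ : ℝ)
    (hβ : 0 < β) (hm : 0 < m) (hD₀ : 0 < D₀) (hσ : 0 < σ)
    (R : ℕ → Ω → ℝ) (D : ℕ → Ω → ℝ)
    (hmeas : ∀ n, Measurable (R n))
    (hindep : iIndepFun R P)
    (hident : ∀ n, Measure.map (R n) P = Measure.map (R 1) P)
    (hrange : ∀ n, ∀ ω, R n ω ∈ Set.Icc (0:ℝ) β)
    (hmean : ∀ n, ∫ ω, R n ω ∂P = m)
    (hD0 : ∀ ω, D 0 ω = D₀)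
    (hrec : ∀ n, ∀ ω, D (n + 1) ω = D n ω + R (n + 1) ω)
    (hlln : ∀ᵐ ω ∂P, Filter.Tendsto (fun n : ℕ => D n ω / n) Filter.atTop (nhds m))
    (hld : ∀ᶠ n : ℕ in Filter.atTop,
      P {ω | ∑ i ∈ Finset.Icc 1 n, R i ω ≤ n * m - σ * (n : ℝ) ^ ((5:ℝ)/8)} ≤
        ENNReal.ofReal (Real.exp (-(n : ℝ) ^ ((1:ℝ)/4) / 2) / (n : ℝ) ^ ((1:ℝ)/8))) :
    ∀ c α : ℝ, 0 ≤ c → 0 ≤ α →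
      Filter.Tendsto
        (fun n : ℕ => (∫ ω, (c + D n ω) ^ (-α) ∂P) * (c + D₀ + m * n) ^ α)
        Filter.atTop (nhds 1) := by
  intro c α hc hα
  -- basic facts
  have hRnn : ∀ i ω, 0 ≤ R i ω := fun i ω => (hrange i ω).1
  have hRle : ∀ i ω, R i ω ≤ β := fun i ω => (hrange i ω).2
  have hDval : ∀ n, D n = fun ω => D₀ + ∑ i ∈ Finset.Icc 1 n, R i ω := by
    intro n
    induction n with
    | zero => funext ω; simp [hD0]
    | succ n ih =>
      funext ω
      rw [hrec, ih, Finset.sum_Icc_succ_top (Nat.succ_le_succ n.zero_le), ← add_assoc]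
  have hDmeas : ∀ n, Measurable (D n) := by
    intro n
    rw [hDval]
    exact measurable_const.add (Finset.measurable_sum _ fun i _ => hmeas i)
  have hDlb : ∀ n ω, D₀ ≤ D n ω := by
    intro n ω
    rw [hDval]
    exact le_add_of_nonneg_right (Finset.sum_nonneg fun i _ => hRnn i ω)
  have hcd : (0:ℝ) < c + D₀ := by linarith
  have hposD : ∀ n ω, 0 < c + D n ω := fun n ω => hcd.trans_le (by linarith [hDlb n ω])
  set a : ℕ → ℝ := fun n => c + D₀ + m * n with ha_def
  have ha : ∀ n, 0 < a n := fun n => by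
    have : (0:ℝ) ≤ m * n := by positivity
    simp only [ha_def]; linarith
  -- integrability
  have hintR : ∀ i, Integrable (R i) P := by
    intro i
    refine ⟨(hmeas i).aestronglyMeasurable, HasFiniteIntegral.of_bounded (C := β) ?_⟩
    exact Filter.Eventually.of_forall fun ω => by
      rw [Real.norm_eq_abs, abs_of_nonneg (hRnn i ω)]; exact hRle i ω
  have hintD : ∀ n, Integrable (D n) P := by
    intro n
    rw [hDval]
    exact (integrable_const D₀).add (integrable_finset_sum _ fun i _ => hintR i)
  have hintf : ∀ n, Integrable (fun ω => (c + D n ω) ^ (-α)) P := by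
    intro n
    have hmf : Measurable fun ω => (c + D n ω) ^ (-α) := by
      have : (fun ω => (c + D n ω) ^ (-α))
          = fun ω => Real.exp (Real.log (c + D n ω) * (-α)) := by
        funext ω; rw [Real.rpow_def_of_pos (hposD n ω)]
      rw [this]
      exact Real.measurable_exp.comp
        ((Real.measurable_log.comp (measurable_const.add (hDmeas n))).mul measurable_const)
    refine ⟨hmf.aestronglyMeasurable,
      HasFiniteIntegral.of_bounded (C := (c + D₀) ^ (-α)) ?_⟩
    refine Filter.Eventually.of_forall fun ω => ?_
    rw [Real.norm_eq_abs, abs_of_nonneg (Real.rpow_nonneg (hposD n ω).le _)]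
    exact Real.rpow_le_rpow_of_nonpos hcd (by linarith [hDlb n ω]) (neg_nonpos.mpr hα)
  have hED : ∀ n, ∫ ω, (c + D n ω) ∂P = a n := by
    intro n
    rw [integral_add (integrable_const c) (hintD n)]
    have : ∫ ω, D n ω ∂P = D₀ + m * n := by
      rw [hDval]
      rw [integral_add (integrable_const D₀) (integrable_finset_sum _ fun i _ => hintR i),
        integral_finset_sum _ fun i _ => hintR i]
      simp only [hmean, Finset.sum_const, Nat.card_Icc, integral_const, measure_univ,
        ENNReal.toReal_one, one_smul, smul_eq_mul, probReal_univ, one_mul]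
      have h : n + 1 - 1 = n := rfl
      rw [h, nsmul_eq_mul]
      ring
    rw [this]
    simp only [ha_def, integral_const, measure_univ, ENNReal.toReal_one, smul_eq_mul, probReal_univ]
    ring
  -- lower bound via Jensen
  have hone : ∀ n, a n ^ (-α) * a n ^ α = 1 := by
    intro n
    rw [Real.rpow_neg (ha n).le, inv_mul_cancel₀ (Real.rpow_pos_of_pos (ha n) α).ne']
  have hlow : ∀ n : ℕ, 1 ≤ (∫ ω, (c + D n ω) ^ (-α) ∂P) * a n ^ α := by
    intro n
    have hjen : (∫ ω, (c + D n ω) ∂P) ^ (-α) ≤ ∫ ω, (c + D n ω) ^ (-α) ∂P := by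
      exact (convexOn_rpow_neg hα hcd).map_integral_le
        (f := fun ω => c + D n ω) (μ := P)
        (fun x hx => (Real.continuousAt_rpow_const x _
          (Or.inl (hcd.trans_le hx).ne')).continuousWithinAt)
        isClosed_Ici
        (Filter.Eventually.of_forall fun ω => by
          simpa using add_le_add_left (hDlb n ω) c)
        ((integrable_const c).add (hintD n)) (hintf n)
    calc 1 = a n ^ (-α) * a n ^ α := (hone n).symm
    _ ≤ (∫ ω, (c + D n ω) ^ (-α) ∂P) * a n ^ α := by
        refine mul_le_mul_of_nonneg_right ?_ (Real.rpow_nonneg (ha n).le α)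
        rw [← hED n]; exact hjen
  -- ε n and its limit
  set ε : ℕ → ℝ := fun n => σ * (n : ℝ) ^ ((5:ℝ)/8) / a n with hε_def
  have hεnn : ∀ n, 0 ≤ ε n := fun n => by
    have := (ha n).le
    positivity
  have hεlim : Filter.Tendsto ε Filter.atTop (nhds 0) := by
    have hb : ∀ᶠ n : ℕ in Filter.atTop, ε n ≤ σ / m * (n : ℝ) ^ (-((3:ℝ)/8)) := by
      filter_upwards [Filter.eventually_ge_atTop 1] with n hn
      have hn0 : (0:ℝ) < n := by exact_mod_cast hn
      have hmn : (0:ℝ) < m * n := by positivity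
      have h1 : ε n ≤ σ * (n : ℝ) ^ ((5:ℝ)/8) / (m * n) := by
        refine div_le_div_of_nonneg_left (by positivity) hmn ?_
        simp only [ha_def]; linarith [hcd]
      refine h1.trans_eq ?_
      have hpow : (n:ℝ) ^ (-((3:ℝ)/8)) = (n : ℝ) ^ ((5:ℝ)/8) / n := by
        rw [show (-((3:ℝ)/8)) = (5:ℝ)/8 - 1 by norm_num, Real.rpow_sub hn0, Real.rpow_one]
      rw [hpow]
      field_simp
    have hg : Filter.Tendsto (fun n : ℕ => σ / m * (n : ℝ) ^ (-((3:ℝ)/8)))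
        Filter.atTop (nhds 0) := by
      have := (tendsto_rpow_neg_atTop (y := (3:ℝ)/8) (by norm_num)).comp
        (tendsto_natCast_atTop_atTop (R := ℝ))
      simpa using this.const_mul (σ / m)
    exact squeeze_zero' (Filter.Eventually.of_forall hεnn) hb hg
  have hεhalf : ∀ᶠ n : ℕ in Filter.atTop, ε n < 1/2 :=
    hεlim.eventually_lt_const (by norm_num)
  -- limit of the two upper-bound terms
  have hT2 : Filter.Tendsto (fun n => (1 - ε n) ^ (-α)) Filter.atTop (nhds 1) := by
    have h1 : Filter.Tendsto (fun n => 1 - ε n) Filter.atTop (nhds 1) := by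
      simpa using (tendsto_const_nhds (x := (1:ℝ)) (f := Filter.atTop (α := ℕ))).sub hεlim
    have := h1.rpow_const (p := -α) (Or.inl one_ne_zero)
    simpa using this
  set F : ℕ → Set Ω :=
    fun n => {ω | ∑ i ∈ Finset.Icc 1 n, R i ω ≤ n * m - σ * (n : ℝ) ^ ((5:ℝ)/8)} with hF_def
  have hFmeas : ∀ n, MeasurableSet (F n) :=
    fun n => measurableSet_le (Finset.measurable_sum _ fun i _ => hmeas i) measurable_const
  have hT1 : Filter.Tendsto (fun n => (P (F n)).toReal * ((c + D₀) ^ (-α) * a n ^ α))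
      Filter.atTop (nhds 0) := by
    have hkey : Filter.Tendsto
        (fun n : ℕ => (n:ℝ) ^ α * Real.exp (-(n:ℝ) ^ ((1:ℝ)/4) / 2))
        Filter.atTop (nhds 0) := by
      have h1 : Filter.Tendsto (fun x : ℝ => x ^ (4*α) * Real.exp (-x / 2))
          Filter.atTop (nhds 0) := by
        refine (tendsto_rpow_mul_exp_neg_mul_atTop_nhds_zero (4*α) (1/2)
          (by norm_num)).congr fun x => ?_
        rw [show -((1:ℝ)/2) * x = -x/2 by ring]
      have h2 : Filter.Tendsto (fun n : ℕ => (n:ℝ) ^ ((1:ℝ)/4))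
          Filter.atTop Filter.atTop :=
        (tendsto_rpow_atTop (by norm_num)).comp tendsto_natCast_atTop_atTop
      refine (h1.comp h2).congr fun n => ?_
      simp only [Function.comp_apply]
      rw [← Real.rpow_mul (Nat.cast_nonneg n)]
      congr 2
      ring
    have hK := hkey.const_mul ((c + D₀) ^ (-α) * (c + D₀ + m) ^ α)
    rw [mul_zero] at hK
    refine squeeze_zero' (Filter.Eventually.of_forall fun n => ?_) ?_ hK
    · exact mul_nonneg ENNReal.toReal_nonneg
        (mul_nonneg (Real.rpow_nonneg hcd.le _) (Real.rpow_nonneg (ha n).le _))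
    · filter_upwards [hld, Filter.eventually_ge_atTop 1] with n hldn hn
      have hn0 : (0:ℝ) < n := by exact_mod_cast hn
      have hn1 : (1:ℝ) ≤ n := by exact_mod_cast hn
      have hPn : (P (F n)).toReal ≤
          Real.exp (-(n:ℝ) ^ ((1:ℝ)/4) / 2) / (n:ℝ) ^ ((1:ℝ)/8) := by
        refine ENNReal.toReal_le_of_le_ofReal ?_ hldn
        exact div_nonneg (Real.exp_pos _).le (Real.rpow_nonneg hn0.le _)
      have hdiv : Real.exp (-(n:ℝ) ^ ((1:ℝ)/4) / 2) / (n:ℝ) ^ ((1:ℝ)/8) ≤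
          Real.exp (-(n:ℝ) ^ ((1:ℝ)/4) / 2) := by
        refine div_le_self (Real.exp_pos _).le ?_
        have := Real.rpow_le_rpow zero_le_one hn1 (by norm_num : (0:ℝ) ≤ 1/8)
        rwa [Real.one_rpow] at this
      have han : a n ^ α ≤ (c + D₀ + m) ^ α * (n:ℝ) ^ α := by
        have h1 : a n ≤ (c + D₀ + m) * n := by
          simp only [ha_def]; nlinarith [hcd]
        have h2 := Real.rpow_le_rpow (ha n).le h1 hα
        rwa [Real.mul_rpow (by linarith [hcd]) hn0.le] at h2
      calc (P (F n)).toReal * ((c + D₀) ^ (-α) * a n ^ α)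
          ≤ (Real.exp (-(n:ℝ) ^ ((1:ℝ)/4) / 2) / (n:ℝ) ^ ((1:ℝ)/8)) *
            ((c + D₀) ^ (-α) * a n ^ α) := by
            exact mul_le_mul_of_nonneg_right hPn
              (mul_nonneg (Real.rpow_nonneg hcd.le _) (Real.rpow_nonneg (ha n).le _))
        _ ≤ Real.exp (-(n:ℝ) ^ ((1:ℝ)/4) / 2) *
            ((c + D₀) ^ (-α) * ((c + D₀ + m) ^ α * (n:ℝ) ^ α)) := by
            refine mul_le_mul hdiv ?_ ?_ (Real.exp_pos _).le
            · exact mul_le_mul_of_nonneg_left han (Real.rpow_nonneg hcd.le _)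
            · exact mul_nonneg (Real.rpow_nonneg hcd.le _) (Real.rpow_nonneg (ha n).le _)
        _ = (c + D₀) ^ (-α) * (c + D₀ + m) ^ α *
            ((n:ℝ) ^ α * Real.exp (-(n:ℝ) ^ ((1:ℝ)/4) / 2)) := by ring
  -- the eventual upper bound
  have hup : ∀ᶠ n : ℕ in Filter.atTop,
      (∫ ω, (c + D n ω) ^ (-α) ∂P) * a n ^ α ≤
        (P (F n)).toReal * ((c + D₀) ^ (-α) * a n ^ α) + (1 - ε n) ^ (-α) := by
    filter_upwards [hεhalf] with n hεn
    have h1ε : 0 < 1 - ε n := by linarith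
    have hB : a n * (1 - ε n) = a n - σ * (n:ℝ) ^ ((5:ℝ)/8) := by
      rw [hε_def]
      rw [mul_sub, mul_one, mul_div_assoc', mul_div_right_comm, div_self (ha n).ne', one_mul]
    have hBpos : 0 < a n - σ * (n:ℝ) ^ ((5:ℝ)/8) := hB ▸ mul_pos (ha n) h1ε
    have hpt : ∀ ω, (c + D n ω) ^ (-α) ≤
        (F n).indicator (fun _ => (c + D₀) ^ (-α)) ω +
          (a n - σ * (n:ℝ) ^ ((5:ℝ)/8)) ^ (-α) := by
      intro ω
      by_cases hω : ω ∈ F n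
      · rw [Set.indicator_of_mem hω]
        have h1 : (c + D n ω) ^ (-α) ≤ (c + D₀) ^ (-α) :=
          Real.rpow_le_rpow_of_nonpos hcd (by linarith [hDlb n ω]) (neg_nonpos.mpr hα)
        have h2 : (0:ℝ) ≤ (a n - σ * (n:ℝ) ^ ((5:ℝ)/8)) ^ (-α) :=
          Real.rpow_nonneg hBpos.le _
        linarith
      · rw [Set.indicator_of_notMem hω, zero_add]
        have hS : (n:ℝ) * m - σ * (n:ℝ) ^ ((5:ℝ)/8) < ∑ i ∈ Finset.Icc 1 n, R i ω := by
          simpa [hF_def] using hω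
        have hcD : a n - σ * (n:ℝ) ^ ((5:ℝ)/8) ≤ c + D n ω := by
          rw [hDval]
          simp only [ha_def]
          have := mul_comm m ((n:ℝ))
          linarith [hS, mul_comm m ((n:ℝ))]
        exact Real.rpow_le_rpow_of_nonpos hBpos hcD (neg_nonpos.mpr hα)
    have hI : ∫ ω, (c + D n ω) ^ (-α) ∂P ≤
        (P (F n)).toReal * (c + D₀) ^ (-α) + (a n - σ * (n:ℝ) ^ ((5:ℝ)/8)) ^ (-α) := by
      have hint2 : Integrable (fun ω => (F n).indicator (fun _ => (c + D₀) ^ (-α)) ω +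
          (a n - σ * (n:ℝ) ^ ((5:ℝ)/8)) ^ (-α)) P :=
        ((integrable_const _).indicator (hFmeas n)).add (integrable_const _)
      have h := integral_mono (hintf n) hint2 hpt
      rwa [integral_add ((integrable_const _).indicator (hFmeas n)) (integrable_const _),
        integral_indicator_const _ (hFmeas n), integral_const, probReal_univ,
        one_smul, smul_eq_mul] at h
    calc (∫ ω, (c + D n ω) ^ (-α) ∂P) * a n ^ α
        ≤ ((P (F n)).toReal * (c + D₀) ^ (-α) +
            (a n - σ * (n:ℝ) ^ ((5:ℝ)/8)) ^ (-α)) * a n ^ α :=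
          mul_le_mul_of_nonneg_right hI (Real.rpow_nonneg (ha n).le α)
      _ = (P (F n)).toReal * ((c + D₀) ^ (-α) * a n ^ α) +
            (a n - σ * (n:ℝ) ^ ((5:ℝ)/8)) ^ (-α) * a n ^ α := by ring
      _ = (P (F n)).toReal * ((c + D₀) ^ (-α) * a n ^ α) + (1 - ε n) ^ (-α) := by
          rw [← hB, Real.mul_rpow (ha n).le h1ε.le]
          rw [mul_comm ((a n) ^ (-α)) ((1 - ε n) ^ (-α)), mul_assoc, hone n, mul_one]
  have hUlim : Filter.Tendsto
      (fun n => (P (F n)).toReal * ((c + D₀) ^ (-α) * a n ^ α) + (1 - ε n) ^ (-α))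
      Filter.atTop (nhds 1) := by
    simpa using hT1.add hT2
  exact tendsto_of_tendsto_of_tendsto_of_le_of_le' tendsto_const_nhds hUlim
    (Filter.Eventually.of_forall hlow) hup
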